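/- For all real numbers M, N > 0 and all nonnegative reals a, b, and integer d ≥ 2, one has (M^(1/(d-1)) + N^(1/(d-1)))^(d-1) · (a/M + b/N) ≥ (a^(1/d) + b^(1/d))^d, with equality if and only if M · b^((d-1)/d) = N · a^((d-1)/d). -/

import Mathlib

open Real

private lemma amgm_strict {θ u v : ℝ} (hθ : 0 < θ) (hθ1 : θ < 1) (hu : 0 ≤ u) (hv : 0 < v) :
    u ^ θ * v ^ (1 - θ) ≤ θ * u + (1 - θ) * v ∧
      (u ^ θ * v ^ (1 - θ) = θ * u + (1 - θ) * v ↔ u = v) := by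
  have h1θ : 0 < 1 - θ := by linarith
  rcases hu.eq_or_lt with h0 | hu'
  · have hz : u ^ θ = 0 := by rw [← h0]; exact Real.zero_rpow hθ.ne'
    have hvne : u ≠ v := by rw [← h0]; exact hv.ne
    have hlt : u ^ θ * v ^ (1 - θ) < θ * u + (1 - θ) * v := by
      rw [hz, zero_mul, ← h0, mul_zero, zero_add]
      positivity
    exact ⟨hlt.le, ⟨fun h => absurd h hlt.ne, fun h => absurd h hvne⟩⟩
  · rcases eq_or_ne u v with rfl | hne
    · have h1 : u ^ θ * u ^ (1 - θ) = u := by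
        rw [← Real.rpow_add hu']; norm_num
      have h2 : θ * u + (1 - θ) * u = u := by ring
      exact ⟨by rw [h1, h2], by rw [h1, h2]⟩
    · have hlog := strictConcaveOn_log_Ioi.2 (Set.mem_Ioi.2 hu') (Set.mem_Ioi.2 hv) hne hθ h1θ
        (by ring)
      simp only [smul_eq_mul] at hlog
      have hpos : 0 < θ * u + (1 - θ) * v := by positivity
      have key : u ^ θ * v ^ (1 - θ) < θ * u + (1 - θ) * v := by
        calc u ^ θ * v ^ (1 - θ) = Real.exp (θ * Real.log u + (1 - θ) * Real.log v) := by
              rw [Real.rpow_def_of_pos hu', Real.rpow_def_of_pos hv, ← Real.exp_add]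
              ring_nf
          _ < Real.exp (Real.log (θ * u + (1 - θ) * v)) := Real.exp_lt_exp.2 hlog
          _ = θ * u + (1 - θ) * v := Real.exp_log hpos
      exact ⟨key.le, ⟨fun h => absurd h key.ne, fun h => absurd h hne⟩⟩



private lemma holder2 {θ x y α β : ℝ} (hθ : 0 < θ) (hθ1 : θ < 1) (hx : 0 ≤ x) (hy : 0 ≤ y)
    (hα : 0 < α) (hβ : 0 < β) :
    x ^ θ * α ^ (1 - θ) + y ^ θ * β ^ (1 - θ) ≤ (x + y) ^ θ * (α + β) ^ (1 - θ) ∧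
      (x ^ θ * α ^ (1 - θ) + y ^ θ * β ^ (1 - θ) = (x + y) ^ θ * (α + β) ^ (1 - θ) ↔
        x * β = y * α) := by
  have hT : 0 < α + β := by linarith
  rcases (add_nonneg hx hy).eq_or_lt with hS | hS
  · have hx0 : x = 0 := by linarith
    have hy0 : y = 0 := by linarith
    subst hx0; subst hy0
    simp [Real.zero_rpow hθ.ne']
  · obtain ⟨h1le, h1eq⟩ := amgm_strict hθ hθ1 (div_nonneg hx hS.le) (div_pos hα hT)
    obtain ⟨h2le, h2eq⟩ := amgm_strict hθ hθ1 (div_nonneg hy hS.le) (div_pos hβ hT)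
    have hP : 0 < (x + y) ^ θ * (α + β) ^ (1 - θ) := by positivity
    have e1 : (x / (x + y)) ^ θ * (α / (α + β)) ^ (1 - θ)
        = x ^ θ * α ^ (1 - θ) / ((x + y) ^ θ * (α + β) ^ (1 - θ)) := by
      rw [Real.div_rpow hx hS.le, Real.div_rpow hα.le hT.le]; ring
    have e2 : (y / (x + y)) ^ θ * (β / (α + β)) ^ (1 - θ)
        = y ^ θ * β ^ (1 - θ) / ((x + y) ^ θ * (α + β) ^ (1 - θ)) := by
      rw [Real.div_rpow hy hS.le, Real.div_rpow hβ.le hT.le]; ring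
    have hsum : θ * (x / (x + y)) + (1 - θ) * (α / (α + β))
        + (θ * (y / (x + y)) + (1 - θ) * (β / (α + β))) = 1 := by
      field_simp; ring
    rw [e1] at h1le h1eq
    rw [e2] at h2le h2eq
    have main_le : x ^ θ * α ^ (1 - θ) + y ^ θ * β ^ (1 - θ)
        ≤ (x + y) ^ θ * (α + β) ^ (1 - θ) := by
      have h := add_le_add h1le h2le
      rw [hsum, ← add_div] at h
      exact (div_le_one hP).1 h
    refine ⟨main_le, ?_, ?_⟩
    · intro h
      -- equality forces both AM-GM equalities
      have hdiv : x ^ θ * α ^ (1 - θ) / ((x + y) ^ θ * (α + β) ^ (1 - θ))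
          + y ^ θ * β ^ (1 - θ) / ((x + y) ^ θ * (α + β) ^ (1 - θ)) = 1 := by
        rw [← add_div, h, div_self hP.ne']
      have g1 : x ^ θ * α ^ (1 - θ) / ((x + y) ^ θ * (α + β) ^ (1 - θ))
          = θ * (x / (x + y)) + (1 - θ) * (α / (α + β)) := by linarith
      have hxα : x / (x + y) = α / (α + β) := h1eq.1 g1
      have hxT : x * (α + β) = α * (x + y) := (div_eq_div_iff hS.ne' hT.ne').1 hxα
      linear_combination hxT
    · intro h
      have hxT : x * (α + β) = α * (x + y) := by linear_combination h
      have hyT : y * (α + β) = β * (x + y) := by linear_combination -h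
      have g1 := h1eq.2 ((div_eq_div_iff hS.ne' hT.ne').2 hxT)
      have g2 := h2eq.2 ((div_eq_div_iff hS.ne' hT.ne').2 hyT)
      have : x ^ θ * α ^ (1 - θ) / ((x + y) ^ θ * (α + β) ^ (1 - θ))
          + y ^ θ * β ^ (1 - θ) / ((x + y) ^ θ * (α + β) ^ (1 - θ)) = 1 := by
        rw [g1, g2]; exact hsum
      rw [← add_div, div_eq_one_iff_eq hP.ne'] at this
      exact this



private lemma rpow_inj_iff {A B c : ℝ} (hA : 0 ≤ A) (hB : 0 ≤ B) (hc : c ≠ 0) :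
    A ^ c = B ^ c ↔ A = B := by
  constructor
  · intro h
    have h' : (A ^ c) ^ c⁻¹ = (B ^ c) ^ c⁻¹ := by rw [h]
    rwa [← Real.rpow_mul hA, ← Real.rpow_mul hB, mul_inv_cancel₀ hc, Real.rpow_one,
      Real.rpow_one] at h'
  · rintro rfl; rfl

theorem bonnesen_vs_brunn_minkowski (d : ℕ) (hd : 2 ≤ d) (M N a b : ℝ)
    (hM : 0 < M) (hN : 0 < N) (ha : 0 ≤ a) (hb : 0 ≤ b) :
    (M ^ ((1:ℝ)/((d:ℝ)-1)) + N ^ ((1:ℝ)/((d:ℝ)-1))) ^ ((d:ℝ)-1) * (a / M + b / N)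
      ≥ (a ^ ((1:ℝ)/(d:ℝ)) + b ^ ((1:ℝ)/(d:ℝ))) ^ (d:ℝ)
    ∧ ((M ^ ((1:ℝ)/((d:ℝ)-1)) + N ^ ((1:ℝ)/((d:ℝ)-1))) ^ ((d:ℝ)-1) * (a / M + b / N)
        = (a ^ ((1:ℝ)/(d:ℝ)) + b ^ ((1:ℝ)/(d:ℝ))) ^ (d:ℝ)
      ↔ M * b ^ (((d:ℝ)-1)/(d:ℝ)) = N * a ^ (((d:ℝ)-1)/(d:ℝ))) := by
  set D : ℝ := (d : ℝ) with hDdef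
  have hD2 : (2:ℝ) ≤ D := by rw [hDdef]; exact_mod_cast hd
  have hD0 : (0:ℝ) < D := by linarith
  have hD1 : (0:ℝ) < D - 1 := by linarith
  have hθ : (0:ℝ) < 1 / D := by positivity
  have hθ1 : 1 / D < 1 := by rw [div_lt_one hD0]; linarith
  have h1θ : 1 - 1 / D = (D - 1) / D := by field_simp
  have hMd : (0:ℝ) < M ^ ((1:ℝ) / (D - 1)) := Real.rpow_pos_of_pos hM _
  have hNd : (0:ℝ) < N ^ ((1:ℝ) / (D - 1)) := Real.rpow_pos_of_pos hN _
  have hxnn : (0:ℝ) ≤ a / M := div_nonneg ha hM.le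
  have hynn : (0:ℝ) ≤ b / N := div_nonneg hb hN.le
  obtain ⟨hle, heq⟩ := holder2 hθ hθ1 hxnn hynn hMd hNd
  -- simplify the cross terms
  have fa : (a / M) ^ (1 / D) * (M ^ ((1:ℝ) / (D - 1))) ^ (1 - 1 / D) = a ^ (1 / D) := by
    rw [h1θ, ← Real.rpow_mul hM.le]
    have e : (1:ℝ) / (D - 1) * ((D - 1) / D) = 1 / D := by field_simp
    rw [e, Real.div_rpow ha hM.le, div_mul_cancel₀]
    exact (Real.rpow_pos_of_pos hM _).ne'
  have fb : (b / N) ^ (1 / D) * (N ^ ((1:ℝ) / (D - 1))) ^ (1 - 1 / D) = b ^ (1 / D) := by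
    rw [h1θ, ← Real.rpow_mul hN.le]
    have e : (1:ℝ) / (D - 1) * ((D - 1) / D) = 1 / D := by field_simp
    rw [e, Real.div_rpow hb hN.le, div_mul_cancel₀]
    exact (Real.rpow_pos_of_pos hN _).ne'
  rw [fa, fb] at hle heq
  set Y : ℝ := M ^ ((1:ℝ) / (D - 1)) + N ^ ((1:ℝ) / (D - 1)) with hYdef
  set X : ℝ := a / M + b / N with hXdef
  have hYpos : 0 < Y := by positivity
  have hXnn : 0 ≤ X := add_nonneg hxnn hynn
  have fP : Y ^ (D - 1) * X = (X ^ (1 / D) * Y ^ (1 - 1 / D)) ^ D := by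
    rw [Real.mul_rpow (Real.rpow_nonneg hXnn _) (Real.rpow_nonneg hYpos.le _),
      ← Real.rpow_mul hXnn, ← Real.rpow_mul hYpos.le]
    have e1 : 1 / D * D = 1 := by field_simp
    have e2 : (1 - 1 / D) * D = D - 1 := by field_simp
    rw [e1, e2, Real.rpow_one]; ring
  have hBnn : 0 ≤ a ^ (1 / D) + b ^ (1 / D) :=
    add_nonneg (Real.rpow_nonneg ha _) (Real.rpow_nonneg hb _)
  have hAnn : 0 ≤ X ^ (1 / D) * Y ^ (1 - 1 / D) :=
    mul_nonneg (Real.rpow_nonneg hXnn _) (Real.rpow_nonneg hYpos.le _)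
  constructor
  · rw [ge_iff_le, fP]
    exact Real.rpow_le_rpow hBnn hle hD0.le
  · rw [fP, rpow_inj_iff hAnn hBnn hD0.ne', eq_comm, heq]
    -- now: a / M * N ^ (1/(D-1)) = b / N * M ^ (1/(D-1)) ↔ M * b^((D-1)/D) = N * a^((D-1)/D)
    have eN : N ^ (D / (D - 1)) = N * N ^ ((1:ℝ) / (D - 1)) := by
      have e : D / (D - 1) = 1 + 1 / (D - 1) := by field_simp; ring
      rw [e, Real.rpow_add hN, Real.rpow_one]
    have eM : M ^ (D / (D - 1)) = M * M ^ ((1:ℝ) / (D - 1)) := by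
      have e : D / (D - 1) = 1 + 1 / (D - 1) := by field_simp; ring
      rw [e, Real.rpow_add hM, Real.rpow_one]
    have left_iff : a / M * N ^ ((1:ℝ) / (D - 1)) = b / N * M ^ ((1:ℝ) / (D - 1))
        ↔ a * N ^ (D / (D - 1)) = b * M ^ (D / (D - 1)) := by
      rw [div_mul_eq_mul_div, div_mul_eq_mul_div, div_eq_div_iff hM.ne' hN.ne', eN, eM]
      constructor <;> intro h <;> linear_combination h
    have right_iff : M * b ^ ((D - 1) / D) = N * a ^ ((D - 1) / D)
        ↔ a * N ^ (D / (D - 1)) = b * M ^ (D / (D - 1)) := by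
      rw [← rpow_inj_iff (mul_nonneg hM.le (Real.rpow_nonneg hb _))
        (mul_nonneg hN.le (Real.rpow_nonneg ha _)) (by positivity : D / (D - 1) ≠ 0)]
      rw [Real.mul_rpow hM.le (Real.rpow_nonneg hb _),
        Real.mul_rpow hN.le (Real.rpow_nonneg ha _),
        ← Real.rpow_mul hb, ← Real.rpow_mul ha]
      have e : (D - 1) / D * (D / (D - 1)) = 1 := by field_simp
      simp only [e, Real.rpow_one]
      constructor <;> intro h <;> linear_combination -h
    rw [left_iff, right_iff]
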